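/- arXiv:2101.01415 — 4 statements merged into one kernel-verified Lean document; each statement's English description precedes it below -/
import Mathlib

section
/- Consider the sampled quasi-linear optimization problem P(ω) for a finite subset ω ⊆ Δ. Then the cardinality of any essential set β of P(ω) satisfies |β| ≤ d; equivalently, there exists a subset β ⊆ ω with at most d elements such that Cost(β) = Cost(ω). -/
/-!
Let `(λ₀, x₀)` be optimal for `ω` and suppose no subfamily of at most `d` constraints has the
same optimal value. Then every such subfamily admits a point that is lexicographically better
than `(λ₀, c x₀)`. For a single constraint `δ`, the points beating `(λ₀, c x₀)` on `δ` form a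
convex set, because `c` is quasiconvex and the constraint is linear in `x`. The constraints are
homogeneous in `x` and `⟪b δ₁, ·⟫` is positive on `X`, so the cones over these sets may be cut
by the `(d - 1)`-dimensional hyperplane `⟪b δ₁, ·⟫ = 1`. Helly's theorem in this hyperplane
then gives one point that beats `(λ₀, c x₀)` on all of `ω`, contradicting optimality.
-/

open scoped RealInnerProductSpace

/-- Feasible points of the sampled quasi-linear problem `P(S)`:
`λ ≥ 0`, `x ∈ X`, and `⟪a δ, x⟫ ≤ λ ⟪b δ, x⟫` for all `δ ∈ S`. -/
def QLFeasible {d : ℕ} {Δ : Type*} (X : Set (EuclideanSpace ℝ (Fin d)))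
    (a b : Δ → EuclideanSpace ℝ (Fin d)) (S : Set Δ)
    (lam : ℝ) (x : EuclideanSpace ℝ (Fin d)) : Prop :=
  0 ≤ lam ∧ x ∈ X ∧ ∀ δ ∈ S, ⟪a δ, x⟫ ≤ lam * ⟪b δ, x⟫

/-- The set of attainable values `(λ, c(x))`, ordered lexicographically,
of the sampled quasi-linear problem `P(S)`. `Cost(S)` is the least element
of this set. -/
def QLValues {d : ℕ} {Δ : Type*} (X : Set (EuclideanSpace ℝ (Fin d)))
    (a b : Δ → EuclideanSpace ℝ (Fin d)) (c : EuclideanSpace ℝ (Fin d) → ℝ)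
    (S : Set Δ) : Set (ℝ ×ₗ ℝ) :=
  {p | ∃ lam x, QLFeasible X a b S lam x ∧ p = toLex (lam, c x)}

open Module Finset Set
open scoped Pointwise

section Helly

variable {ι E : Type*} [AddCommGroup E] [Module ℝ E] [FiniteDimensional ℝ E]

/-- The hyperplane has dimension `finrank ℝ E - 1`, so Helly's number drops by one. -/
theorem Convex.helly_theorem_of_subset_levelSet {f : Dual ℝ E} (hf : f ≠ 0) {F : ι → Set E}
    {s : Finset ι} (h_convex : ∀ i ∈ s, Convex ℝ (F i)) (h_level : ∀ i ∈ s, F i ⊆ f ⁻¹' {1})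
    (h_inter : ∀ I ⊆ s, #I ≤ finrank ℝ E → (⋂ i ∈ I, F i).Nonempty) :
    (⋂ i ∈ s, F i).Nonempty := by
  obtain ⟨p, hp⟩ := LinearMap.surjective hf 1
  let A : LinearMap.ker f →ᵃ[ℝ] E :=
    (AffineEquiv.constVAdd ℝ E p).toAffineMap.comp (LinearMap.ker f).subtype.toAffineMap
  have hA : ∀ z, A z = p + z := fun _ => rfl
  obtain ⟨z, hz⟩ := Convex.helly_theorem' (F := fun i => A ⁻¹' F i) (s := s)
    (fun i hi => (h_convex i hi).affine_preimage A) fun I hI hcard => by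
      rcases I.eq_empty_or_nonempty with rfl | ⟨i, hi⟩
      · simp
      rw [f.finrank_ker_add_one_of_ne_zero hf] at hcard
      obtain ⟨x, hx⟩ := h_inter I hI hcard
      rw [mem_iInter₂] at hx
      have hker : x - p ∈ LinearMap.ker f := by
        have hfx : f x = 1 := h_level i (hI hi) (hx i hi)
        simp [hfx, hp]
      exact ⟨⟨x - p, hker⟩, mem_iInter₂.2 fun j hj => by simpa [hA] using hx j hj⟩
  exact ⟨A z, by simpa using hz⟩

theorem ConvexCone.helly_theorem {f : Dual ℝ E} (hf : f ≠ 0) {F : ι → ConvexCone ℝ E}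
    {s : Finset ι} (h_pos : ∀ i ∈ s, ∀ x ∈ F i, 0 < f x)
    (h_inter : ∀ I ⊆ s, #I ≤ finrank ℝ E → (⋂ i ∈ I, (F i : Set E)).Nonempty) :
    (⋂ i ∈ s, (F i : Set E)).Nonempty := by
  obtain ⟨y, hy⟩ := Convex.helly_theorem_of_subset_levelSet hf (F := fun i => F i ∩ f ⁻¹' {1})
    (fun i _ => (F i).convex.inter ((convex_singleton 1).linear_preimage f))
    (fun i _ => inter_subset_right) fun I hI hcard => by
      rcases I.eq_empty_or_nonempty with rfl | ⟨i, hi⟩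
      · simp
      obtain ⟨x, hx⟩ := h_inter I hI hcard
      rw [mem_iInter₂] at hx
      have hfx : 0 < f x := h_pos i (hI hi) x (hx i hi)
      refine ⟨(f x)⁻¹ • x, mem_iInter₂.2 fun j hj => ⟨(F j).smul_mem (inv_pos.2 hfx) (hx j hj), ?_⟩⟩
      simp [hfx.ne']
  exact ⟨y, mem_iInter₂.2 fun i hi => (mem_iInter₂.1 hy i hi).1⟩

end Helly

theorem ConvexOn.convex_lt_union_le {E : Type*} [AddCommGroup E] [Module ℝ E] {C D : Set E}
    {g : E → ℝ} (hg : ConvexOn ℝ C g) (hD : Convex ℝ D) (hDC : D ⊆ C) (r : ℝ) :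
    Convex ℝ ({x ∈ C | g x < r} ∪ {x ∈ D | g x ≤ r}) := by
  have mix : ∀ ⦃x y : E⦄ ⦃s t : ℝ⦄, x ∈ C → g x < r → y ∈ D → g y ≤ r → 0 < s → 0 ≤ t →
      s + t = 1 → s • x + t • y ∈ {x ∈ C | g x < r} := by
    intro x y s t hx hgx hy hgy hs ht hst
    refine ⟨hg.1 hx (hDC hy) hs.le ht hst, ?_⟩
    calc g (s • x + t • y) ≤ s * g x + t * g y := hg.2 hx (hDC hy) hs.le ht hst
      _ < s * r + t * r := add_lt_add_of_lt_of_le (by gcongr) (by gcongr)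
      _ = r := by rw [← add_mul, hst, one_mul]
  rintro x (hx | hx) y (hy | hy) s t hs ht hst
  · exact Or.inl (hg.convex_lt r hx hy hs ht hst)
  · rcases hs.eq_or_lt with rfl | hs
    · rw [zero_add] at hst
      simpa [hst] using Or.inr hy
    · exact Or.inl (mix hx.1 hx.2 hy.1 hy.2 hs ht hst)
  · rcases ht.eq_or_lt with rfl | ht
    · rw [add_zero] at hst
      simpa [hst] using Or.inr hx
    · rw [add_comm]
      exact Or.inl (mix hy.1 hy.2 hx.1 hx.2 ht hs (by rw [add_comm, hst]))
  · exact Or.inr ((hg.subset hDC hD).convex_le r hx hy hs ht hst)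

section ImprovingSet

variable {E Δ : Type*} [NormedAddCommGroup E] [InnerProductSpace ℝ E]

/-- The points of `X` that beat the value `toLex (lam0, c0)` on the constraint `δ` alone: either
with a strictly smaller `λ`, or with the same `λ` and a strictly smaller cost. -/
def improvingSet (X : Set E) (a b : Δ → E) (c : E → ℝ) (lam0 c0 : ℝ) (δ : Δ) : Set E :=
  {x ∈ X | (0 < lam0 ∧ ⟪a δ, x⟫ < lam0 * ⟪b δ, x⟫) ∨ (c x < c0 ∧ ⟪a δ, x⟫ ≤ lam0 * ⟪b δ, x⟫)}

variable {X : Set E} {a b : Δ → E} {c : E → ℝ} {lam0 c0 : ℝ}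

lemma inner_smul_right_lt_mul_iff {v w x : E} {l t : ℝ} (ht : 0 < t) :
    ⟪v, t • x⟫ < l * ⟪w, t • x⟫ ↔ ⟪v, x⟫ < l * ⟪w, x⟫ := by
  rw [real_inner_smul_right, real_inner_smul_right, mul_left_comm, mul_lt_mul_iff_right₀ ht]

lemma inner_smul_right_le_mul_iff {v w x : E} {l t : ℝ} (ht : 0 < t) :
    ⟪v, t • x⟫ ≤ l * ⟪w, t • x⟫ ↔ ⟪v, x⟫ ≤ l * ⟪w, x⟫ := by
  rw [real_inner_smul_right, real_inner_smul_right, mul_left_comm, mul_le_mul_iff_right₀ ht]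

lemma convex_improvingSet (hX : Convex ℝ X) (hc : QuasiconvexOn ℝ X c) (δ : Δ) :
    Convex ℝ (improvingSet X a b c lam0 c0 δ) := by
  let g : E →ₗ[ℝ] ℝ := innerₛₗ ℝ (a δ) - lam0 • innerₛₗ ℝ (b δ)
  have hg : ∀ x, g x = ⟪a δ, x⟫ - lam0 * ⟪b δ, x⟫ := fun x => rfl
  rcases lt_or_ge 0 lam0 with hlam | hlam
  · convert (g.convexOn hX).convex_lt_union_le (hc.convex_lt c0) (fun x hx => hx.1) 0 using 1
    ext x
    simp only [improvingSet, hg, sub_neg, sub_nonpos, hlam, true_and, mem_union, mem_ofPred_eq]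
    tauto
  · convert (g.convexOn (hc.convex_lt c0)).convex_le 0 using 1
    ext x
    simp only [improvingSet, hg, sub_nonpos, hlam.not_gt, false_and, false_or, mem_ofPred_eq]
    tauto

/-- Points of `X` on a common ray agree on every constraint. So if one of them has smaller
cost it improves on all constraints at once; otherwise every constraint is improved strictly. -/
lemma iInter_improvingSet_nonempty_of_mem_smul {S : Finset Δ} (hS : S.Nonempty) {y : E}
    (hy : ∀ δ ∈ S, ∃ t : ℝ, 0 < t ∧ y ∈ t • improvingSet X a b c lam0 c0 δ) :
    (⋂ δ ∈ S, improvingSet X a b c lam0 c0 δ).Nonempty := by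
  simp only [mem_smul_set] at hy
  choose! t ht x hx hxy using hy
  have lt_iff : ∀ δ ∈ S, ∀ δ', ⟪a δ', x δ⟫ < lam0 * ⟪b δ', x δ⟫ ↔ ⟪a δ', y⟫ < lam0 * ⟪b δ', y⟫ :=
    fun δ hδ δ' => by rw [← hxy δ hδ, inner_smul_right_lt_mul_iff (ht δ hδ)]
  have le_iff : ∀ δ ∈ S, ∀ δ', ⟪a δ', x δ⟫ ≤ lam0 * ⟪b δ', x δ⟫ ↔ ⟪a δ', y⟫ ≤ lam0 * ⟪b δ', y⟫ :=
    fun δ hδ δ' => by rw [← hxy δ hδ, inner_smul_right_le_mul_iff (ht δ hδ)]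
  by_cases hcost : ∃ δ ∈ S, c (x δ) < c0
  · obtain ⟨δ, hδ, hcδ⟩ := hcost
    refine ⟨x δ, mem_iInter₂.2 fun δ' hδ' => ⟨(hx δ hδ).1, Or.inr ⟨hcδ, ?_⟩⟩⟩
    rw [le_iff δ hδ, ← le_iff δ' hδ']
    rcases (hx δ' hδ').2 with h | h
    exacts [h.2.le, h.2]
  · push Not at hcost
    obtain ⟨δ, hδ⟩ := hS
    refine ⟨x δ, mem_iInter₂.2 fun δ' hδ' => ⟨(hx δ hδ).1, Or.inl ?_⟩⟩
    rw [lt_iff δ hδ, ← lt_iff δ' hδ']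
    rcases (hx δ' hδ').2 with h | h
    exacts [h, absurd h.1 (hcost δ' hδ').not_gt]

theorem iInter_improvingSet_nonempty [FiniteDimensional ℝ E] (hX : Convex ℝ X)
    (hX_ne : X.Nonempty) (hc : QuasiconvexOn ℝ X c) (hb : ∀ δ, ∀ x ∈ X, 0 < ⟪b δ, x⟫)
    {S : Finset Δ} (hS : S.Nonempty)
    (h : ∀ I ⊆ S, #I ≤ finrank ℝ E → (⋂ δ ∈ I, improvingSet X a b c lam0 c0 δ).Nonempty) :
    (⋂ δ ∈ S, improvingSet X a b c lam0 c0 δ).Nonempty := by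
  obtain ⟨δ₁, hδ₁⟩ := hS
  obtain ⟨x₁, hx₁⟩ := hX_ne
  have hU := convex_improvingSet (a := a) (b := b) (lam0 := lam0) (c0 := c0) hX hc
  have hf : innerₛₗ ℝ (b δ₁) ≠ 0 := fun h => (hb δ₁ x₁ hx₁).ne' (by simpa using congr($h x₁))
  obtain ⟨y, hy⟩ := ConvexCone.helly_theorem hf
    (F := fun δ => ConvexCone.hull ℝ (improvingSet X a b c lam0 c0 δ)) (s := S)
    (fun δ _ y hy => by
      obtain ⟨t, ht, x, hx, rfl⟩ := (ConvexCone.mem_hull_of_convex (hU δ)).1 hy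
      simpa [real_inner_smul_right] using mul_pos ht (hb δ₁ x hx.1))
    fun I hI hcard => (h I hI hcard).mono (iInter₂_mono fun δ _ => ConvexCone.subset_hull)
  exact iInter_improvingSet_nonempty_of_mem_smul ⟨δ₁, hδ₁⟩ fun δ hδ =>
    (ConvexCone.mem_hull_of_convex (hU δ)).1 (mem_iInter₂.1 hy δ hδ)

end ImprovingSet

section QuasiLinear

variable {d : ℕ} {Δ : Type*} {X : Set (EuclideanSpace ℝ (Fin d))}
  {a b : Δ → EuclideanSpace ℝ (Fin d)} {c : EuclideanSpace ℝ (Fin d) → ℝ}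

lemma QLFeasible.mono {S T : Set Δ} {lam : ℝ} {x : EuclideanSpace ℝ (Fin d)}
    (h : QLFeasible X a b S lam x) (hTS : T ⊆ S) : QLFeasible X a b T lam x :=
  ⟨h.1, h.2.1, fun δ hδ => h.2.2 δ (hTS hδ)⟩

lemma mem_iInter_improvingSet_of_lt (hb : ∀ δ, ∀ x ∈ X, 0 < ⟪b δ, x⟫) {S : Finset Δ}
    {lam lam0 c0 : ℝ} {x : EuclideanSpace ℝ (Fin d)} (h : QLFeasible X a b S lam x)
    (hlt : toLex (lam, c x) < toLex (lam0, c0)) :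
    x ∈ ⋂ δ ∈ S, improvingSet X a b c lam0 c0 δ := by
  refine mem_iInter₂.2 fun δ hδ => ⟨h.2.1, ?_⟩
  have hcon := h.2.2 δ hδ
  rcases Prod.Lex.toLex_lt_toLex.1 hlt with hlam | ⟨rfl, hcost⟩
  · exact Or.inl ⟨h.1.trans_lt hlam, hcon.trans_lt (by gcongr; exact hb δ x h.2.1)⟩
  · exact Or.inr ⟨hcost, hcon⟩

/-- In the strict case, `λ` can be lowered to the largest of the finitely many ratios
`⟪a δ, x⟫ / ⟪b δ, x⟫` (or to `0`). -/
lemma exists_lt_of_mem_iInter_improvingSet (hb : ∀ δ, ∀ x ∈ X, 0 < ⟪b δ, x⟫) {S : Finset Δ}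
    (hS : S.Nonempty) {lam0 c0 : ℝ} (hlam0 : 0 ≤ lam0) {x : EuclideanSpace ℝ (Fin d)}
    (hx : x ∈ ⋂ δ ∈ S, improvingSet X a b c lam0 c0 δ) :
    ∃ p ∈ QLValues X a b c S, p < toLex (lam0, c0) := by
  rw [mem_iInter₂] at hx
  obtain ⟨δ₁, hδ₁⟩ := hS
  have hxX : x ∈ X := (hx δ₁ hδ₁).1
  by_cases hcost : c x < c0
  · refine ⟨toLex (lam0, c x), ⟨lam0, x, ⟨hlam0, hxX, fun δ hδ => ?_⟩, rfl⟩,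
      Prod.Lex.toLex_lt_toLex.2 (Or.inr ⟨rfl, hcost⟩)⟩
    rcases (hx δ hδ).2 with h | h
    exacts [h.2.le, h.2]
  have hstrict : ∀ δ ∈ S, 0 < lam0 ∧ ⟪a δ, x⟫ < lam0 * ⟪b δ, x⟫ := fun δ hδ =>
    ((hx δ hδ).2.resolve_right fun h => hcost h.1)
  let ratio : Δ → ℝ := fun δ => ⟪a δ, x⟫ / ⟪b δ, x⟫
  let lam := max 0 (S.sup' ⟨δ₁, hδ₁⟩ ratio)
  have hlam : lam < lam0 := max_lt (hstrict δ₁ hδ₁).1 <|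
    (Finset.sup'_lt_iff _).2 fun δ hδ => (div_lt_iff₀ (hb δ x hxX)).2 (hstrict δ hδ).2
  refine ⟨toLex (lam, c x), ⟨lam, x, ⟨le_max_left _ _, hxX, fun δ hδ => ?_⟩, rfl⟩,
    Prod.Lex.toLex_lt_toLex.2 (Or.inl hlam)⟩
  exact (div_le_iff₀ (hb δ x hxX)).1
    ((le_sup' ratio (Finset.mem_coe.1 hδ)).trans (le_max_right _ _))

end QuasiLinear

theorem essential_set_card_le_general {d : ℕ} {Δ : Type*}
    (X : Set (EuclideanSpace ℝ (Fin d)))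
    (hXconvex : Convex ℝ X)
    (a b : Δ → EuclideanSpace ℝ (Fin d))
    (hb : ∀ δ : Δ, ∀ x ∈ X, 0 < ⟪b δ, x⟫)
    (c : EuclideanSpace ℝ (Fin d) → ℝ) (m : ℝ) (hm : 0 < m)
    (hc : StrongConvexOn Set.univ m c)
    (ω : Finset Δ) (v : ℝ ×ₗ ℝ)
    (hv : IsLeast (QLValues X a b c (ω : Set Δ)) v) :
    ∃ β : Finset Δ, β ⊆ ω ∧ β.card ≤ d ∧
      IsLeast (QLValues X a b c (β : Set Δ)) v := by
  by_cases hsmall : #ω ≤ d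
  · exact ⟨ω, Finset.Subset.rfl, hsmall, hv⟩
  have hω : ω.Nonempty := card_pos.1 (by omega)
  obtain ⟨⟨lam0, x0, hfeas, rfl⟩, hleast⟩ := hv
  have hcq : QuasiconvexOn ℝ X c :=
    ((strongConvexOn_zero.1 (hc.mono hm.le)).subset (subset_univ X) hXconvex).quasiconvexOn
  by_contra! hno
  have himp : ∀ I ⊆ ω, #I ≤ finrank ℝ (EuclideanSpace ℝ (Fin d)) →
      (⋂ δ ∈ I, improvingSet X a b c lam0 (c x0) δ).Nonempty := by
    intro I hI hcard
    rw [finrank_euclideanSpace_fin] at hcard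
    have hmem : toLex (lam0, c x0) ∈ QLValues X a b c I :=
      ⟨lam0, x0, hfeas.mono (by simpa using hI), rfl⟩
    obtain ⟨_, ⟨lam, x, hx, rfl⟩, hlt⟩ : ∃ p ∈ QLValues X a b c I, p < toLex (lam0, c x0) := by
      simpa [IsLeast, mem_lowerBounds, hmem] using hno I hI hcard
    exact ⟨x, mem_iInter_improvingSet_of_lt hb hx hlt⟩
  obtain ⟨x, hx⟩ := iInter_improvingSet_nonempty hXconvex ⟨x0, hfeas.2.1⟩ hcq hb hω himp
  obtain ⟨p, hp, hlt⟩ := exists_lt_of_mem_iInter_improvingSet hb hω hfeas.1 hx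
  exact (hleast hp).not_gt hlt

/-- Theorem 1 (cardinality of essential sets of quasi-linear problems):
there is a subset `β ⊆ ω` with at most `d` elements achieving the same
optimal value as `P(ω)`; in particular every essential set has cardinality
at most `d`. -/
theorem essential_set_card_le {d : ℕ} (hd : 1 ≤ d) {Δ : Type*}
    (X : Set (EuclideanSpace ℝ (Fin d)))
    (hXcompact : IsCompact X) (hXconvex : Convex ℝ X)
    (hXint : (interior X).Nonempty) (hX0 : (0 : EuclideanSpace ℝ (Fin d)) ∉ X)
    (a b : Δ → EuclideanSpace ℝ (Fin d))
    (hb : ∀ δ : Δ, ∀ x ∈ X, 0 < ⟪b δ, x⟫)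
    (c : EuclideanSpace ℝ (Fin d) → ℝ) (m : ℝ) (hm : 0 < m)
    (hc : StrongConvexOn Set.univ m c)
    (ω : Finset Δ) (v : ℝ ×ₗ ℝ)
    (hv : IsLeast (QLValues X a b c (ω : Set Δ)) v) :
    ∃ β : Finset Δ, β ⊆ ω ∧ β.card ≤ d ∧
      IsLeast (QLValues X a b c (β : Set Δ)) v :=
  essential_set_card_le_general X hXconvex a b hb c m hm hc ω v hv
end

section
/- Consider the sampled quasi-linear optimization problem P(ω) for a finite subset ω ⊆ Δ, and let (λ*, x*) = Opt(ω). If λ* = 0, then there exists a subset β ⊆ ω with at most d − 1 elements such that Cost(β) = Cost(ω); in particular, every essential set of P(ω) has cardinality at most d − 1 in this case. -/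
open scoped RealInnerProductSpace

/-!
With `λ* = 0`, the point `x*` minimises `c` over `X` cut by the homogeneous halfspaces
`⟪a δ, y⟫ ≤ 0`, `δ ∈ ω`. By convexity the inactive constraints can be dropped, so no point of the
convex set `{y ∈ X | c y < c x*}` satisfies all active constraints `⟪a δ, y⟫ ≤ 0`, those with
`⟪a δ, x*⟫ = 0`. The active normals are orthogonal to `x* ≠ 0`, so projecting along `x*` turns this
into a statement in dimension `d - 1`, where Helly's theorem keeps at most `d - 1` of the
halfspaces, since all of them contain the origin.
-/

open Filter Topology Module Finset

theorem IsMinOn.drop_inactive_constraints {E ι : Type*} [AddCommGroup E] [TopologicalSpace E]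
    [IsTopologicalAddGroup E] [Module ℝ E] [ContinuousSMul ℝ E] {X : Set E} {c : E → ℝ}
    (hX : Convex ℝ X) (hc : ConvexOn ℝ X c) (f : ι → E →L[ℝ] ℝ) (s : Finset ι) {x : E}
    (hx : x ∈ X ∩ {y | ∀ i ∈ s, f i y ≤ 0})
    (hmin : IsMinOn c (X ∩ {y | ∀ i ∈ s, f i y ≤ 0}) x) :
    IsMinOn c (X ∩ {y | ∀ i ∈ s, f i x = 0 → f i y ≤ 0}) x := by
  have hconvex : Convex ℝ {y | ∀ i ∈ s, f i x = 0 → f i y ≤ 0} := by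
    simp only [Set.ofPred_forall]
    exact convex_iInter₂ fun i _ => convex_iInter fun _ =>
      convex_halfSpace_le (f i).toLinearMap.isLinear 0
  refine IsMinOn.of_isLocalMinOn_of_convexOn ⟨hx.1, fun i hi _ => hx.2 i hi⟩ ?_
    (hc.subset Set.inter_subset_left (hX.inter hconvex))
  have hinactive : ∀ᶠ y in 𝓝 x, ∀ i ∈ s, f i x ≠ 0 → f i y < 0 := by
    refine (eventually_all_finset s).2 fun i hi => ?_
    by_cases h : f i x = 0
    · exact Eventually.of_forall fun _ h' => absurd h h'
    · exact ((f i).continuous.continuousAt.eventually_lt continuousAt_const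
        ((hx.2 i hi).lt_of_ne h)).mono fun _ hy _ => hy
  filter_upwards [eventually_nhdsWithin_of_eventually_nhds hinactive, self_mem_nhdsWithin]
    with y hy hyX
  refine hmin ⟨hyX.1, fun i hi => ?_⟩
  by_cases h : f i x = 0
  exacts [hyX.2 i hi h, (hy i hi h).le]

theorem Convex.exists_halfspace_subcover_card_le_finrank {E ι : Type*} [AddCommGroup E]
    [Module ℝ E] [FiniteDimensional ℝ E] {S : Set E} (hS : Convex ℝ S) (f : ι → Dual ℝ E)
    (s : Finset ι) (hcover : ∀ y ∈ S, ∃ i ∈ s, 0 < f i y) :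
    ∃ t ⊆ s, #t ≤ finrank ℝ E ∧ ∀ y ∈ S, ∃ i ∈ t, 0 < f i y := by
  classical
  let F : Option ι → Set E := fun o => o.elim S fun i => {y | f i y ≤ 0}
  have hconvex : ∀ o ∈ s.insertNone, Convex ℝ (F o) := by
    rintro (_ | i) -
    exacts [hS, convex_halfSpace_le (f i).isLinear 0]
  have hempty : ¬ (⋂ o ∈ s.insertNone, F o).Nonempty := by
    rintro ⟨y, hy⟩
    simp only [Set.mem_iInter] at hy
    obtain ⟨i, hi, hpos⟩ := hcover y (hy none (by simp))
    exact (hy (some i) (by simpa using hi)).not_gt hpos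
  obtain ⟨I, hIs, hIcard, hIempty⟩ : ∃ I ⊆ s.insertNone, #I ≤ finrank ℝ E + 1 ∧
      ¬ (⋂ o ∈ I, F o).Nonempty := by
    by_contra! h
    exact hempty (Convex.helly_theorem' hconvex h)
  -- `0` lies in every halfspace `f i ≤ 0`, so the Helly witness must contain `S`.
  have hnone : none ∈ I := by
    by_contra hnone
    refine hIempty ⟨0, Set.mem_iInter₂.2 ?_⟩
    rintro (_ | i) hi
    exacts [absurd hi hnone, by simp [F]]
  refine ⟨I.eraseNone, fun i hi => by simpa using hIs (mem_eraseNone.1 hi), ?_, fun y hy => ?_⟩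
  · rw [card_eraseNone_of_mem hnone]
    omega
  · have : y ∉ ⋂ o ∈ I, F o := fun h => hIempty ⟨y, h⟩
    simp only [Set.mem_iInter, not_forall] at this
    obtain ⟨(_ | i), hi, hyi⟩ := this
    exacts [absurd hy hyi, ⟨i, mem_eraseNone.2 hi, lt_of_not_ge hyi⟩]

theorem Convex.exists_halfspace_subcover_card_le_finrank_sub_one {E ι : Type*} [AddCommGroup E]
    [Module ℝ E] [FiniteDimensional ℝ E] {S : Set E} (hS : Convex ℝ S) (f : ι → Dual ℝ E)
    (s : Finset ι) {v : E} (hv : v ≠ 0) (hfv : ∀ i ∈ s, f i v = 0)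
    (hcover : ∀ y ∈ S, ∃ i ∈ s, 0 < f i y) :
    ∃ t ⊆ s, #t ≤ finrank ℝ E - 1 ∧ ∀ y ∈ S, ∃ i ∈ t, 0 < f i y := by
  obtain ⟨K, hK⟩ := (ℝ ∙ v).exists_isCompl
  let p := K.projectionOnto (ℝ ∙ v) hK.symm
  have hfp : ∀ i ∈ s, ∀ y, f i (p y) = f i y := by
    intro i hi y
    obtain ⟨r, hr⟩ := Submodule.mem_span_singleton.1 (K.sub_projection_mem hK.symm y)
    have : f i (y - p y) = 0 := by rw [Submodule.coe_projectionOnto_apply, ← hr]; simp [hfv i hi]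
    rwa [map_sub, sub_eq_zero, eq_comm] at this
  have hrank : finrank ℝ K = finrank ℝ E - 1 := by
    have := Submodule.finrank_add_eq_of_isCompl hK
    rw [finrank_span_singleton hv] at this
    omega
  obtain ⟨t, hts, htcard, htcover⟩ :=
    (hS.linear_image p).exists_halfspace_subcover_card_le_finrank (fun i => f i ∘ₗ K.subtype) s
      (by
        rintro _ ⟨y, hy, rfl⟩
        obtain ⟨i, hi, hpos⟩ := hcover y hy
        exact ⟨i, hi, by simpa [hfp i hi] using hpos⟩)
  refine ⟨t, hts, hrank ▸ htcard, fun y hy => ?_⟩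
  obtain ⟨i, hi, hpos⟩ := htcover (p y) ⟨y, hy, rfl⟩
  exact ⟨i, hi, by simpa [hfp i (hts hi)] using hpos⟩

theorem isLeast_qlValues_toLex_zero_iff {d : ℕ} {Δ : Type*} {X : Set (EuclideanSpace ℝ (Fin d))}
    {a b : Δ → EuclideanSpace ℝ (Fin d)} {c : EuclideanSpace ℝ (Fin d) → ℝ} {S : Set Δ}
    {x : EuclideanSpace ℝ (Fin d)} (hx : x ∈ X ∩ {y | ∀ δ ∈ S, ⟪a δ, y⟫ ≤ 0}) :
    IsLeast (QLValues X a b c S) (toLex (0, c x)) ↔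
      IsMinOn c (X ∩ {y | ∀ δ ∈ S, ⟪a δ, y⟫ ≤ 0}) x := by
  have hfeas : ∀ y, QLFeasible X a b S 0 y ↔ y ∈ X ∩ {y | ∀ δ ∈ S, ⟪a δ, y⟫ ≤ 0} := by
    simp [QLFeasible]
  constructor
  · intro hleast y hy
    have := hleast.2 ⟨0, y, (hfeas y).2 hy, rfl⟩
    simpa [Prod.Lex.toLex_le_toLex] using this
  · refine fun hmin => ⟨⟨0, x, (hfeas x).2 hx, rfl⟩, ?_⟩
    rintro _ ⟨lam, y, hy, rfl⟩
    rcases hy.1.lt_or_eq with hlam | rfl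
    · exact Prod.Lex.toLex_le_toLex.2 (Or.inl hlam)
    · exact Prod.Lex.toLex_le_toLex.2 (Or.inr ⟨rfl, hmin ((hfeas y).1 hy)⟩)

theorem essential_set_card_le_of_lambda_eq_zero_general {d : ℕ} {Δ : Type*}
    (X : Set (EuclideanSpace ℝ (Fin d)))
    (hXconvex : Convex ℝ X)
    (hX0 : (0 : EuclideanSpace ℝ (Fin d)) ∉ X)
    (a b : Δ → EuclideanSpace ℝ (Fin d))
    (c : EuclideanSpace ℝ (Fin d) → ℝ) (m : ℝ) (hm : 0 < m)
    (hc : StrongConvexOn Set.univ m c)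
    (ω : Finset Δ) (lamstar : ℝ) (xstar : EuclideanSpace ℝ (Fin d))
    (hfeas : QLFeasible X a b (ω : Set Δ) lamstar xstar)
    (hopt : IsLeast (QLValues X a b c (ω : Set Δ)) (toLex (lamstar, c xstar)))
    (hlam : lamstar = 0) :
    ∃ β : Finset Δ, β ⊆ ω ∧ β.card ≤ d - 1 ∧
      IsLeast (QLValues X a b c (β : Set Δ)) (toLex (lamstar, c xstar)) := by
  classical
  subst hlam
  have hcX : ConvexOn ℝ X c := (hc.strictConvexOn hm).convexOn.subset (Set.subset_univ X) hXconvex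
  have hx : xstar ∈ X ∩ {y | ∀ δ ∈ (ω : Set Δ), ⟪a δ, y⟫ ≤ 0} :=
    ⟨hfeas.2.1, by simpa using hfeas.2.2⟩
  have hactive := ((isLeast_qlValues_toLex_zero_iff hx).1 hopt).drop_inactive_constraints
    hXconvex hcX (fun δ => innerSL ℝ (a δ)) ω hx
  obtain ⟨β, hβ, hcard, hcover⟩ :=
    (hcX.convex_lt (c xstar)).exists_halfspace_subcover_card_le_finrank_sub_one
      (fun δ => innerSL ℝ (a δ)) {δ ∈ ω | ⟪a δ, xstar⟫ = 0} (ne_of_mem_of_not_mem hx.1 hX0)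
      (fun δ hδ => (mem_filter.1 hδ).2) fun y ⟨hyX, hy⟩ => by
        by_contra! h
        exact (hactive ⟨hyX, fun δ hδ h0 => h δ (mem_filter.2 ⟨hδ, h0⟩)⟩).not_gt hy
  refine ⟨β, hβ.trans (filter_subset _ _), by simpa using hcard,
    (isLeast_qlValues_toLex_zero_iff ⟨hx.1, fun δ hδ => (mem_filter.1 (hβ hδ)).2.le⟩).2
      fun y hy => ?_⟩
  change c xstar ≤ c y
  by_contra! h
  obtain ⟨δ, hδ, hpos⟩ := hcover y ⟨hy.1, h⟩
  exact (hy.2 δ hδ).not_gt hpos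

/-- If the optimal solution `(λ*, x*)` of `P(ω)` has `λ* = 0`, then there is a
subset `β ⊆ ω` with at most `d - 1` elements achieving the same optimal value;
in particular every essential set of `P(ω)` has cardinality at most `d - 1`. -/
theorem essential_set_card_le_of_lambda_eq_zero {d : ℕ} (hd : 1 ≤ d) {Δ : Type*}
    (X : Set (EuclideanSpace ℝ (Fin d)))
    (hXcompact : IsCompact X) (hXconvex : Convex ℝ X)
    (hXint : (interior X).Nonempty) (hX0 : (0 : EuclideanSpace ℝ (Fin d)) ∉ X)
    (a b : Δ → EuclideanSpace ℝ (Fin d))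
    (hb : ∀ δ : Δ, ∀ x ∈ X, 0 < ⟪b δ, x⟫)
    (c : EuclideanSpace ℝ (Fin d) → ℝ) (m : ℝ) (hm : 0 < m)
    (hc : StrongConvexOn Set.univ m c)
    (ω : Finset Δ) (lamstar : ℝ) (xstar : EuclideanSpace ℝ (Fin d))
    (hfeas : QLFeasible X a b (ω : Set Δ) lamstar xstar)
    (hopt : IsLeast (QLValues X a b c (ω : Set Δ)) (toLex (lamstar, c xstar)))
    (hlam : lamstar = 0) :
    ∃ β : Finset Δ, β ⊆ ω ∧ β.card ≤ d - 1 ∧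
      IsLeast (QLValues X a b c (β : Set Δ)) (toLex (lamstar, c xstar)) :=
  essential_set_card_le_of_lambda_eq_zero_general X hXconvex hX0 a b c m hm hc ω lamstar xstar hfeas
    hopt hlam
end

section
/- For every finite subset ω ⊆ Δ, the sampled quasi-linear problem P(ω) is feasible (there exist λ ≥ 0 and x ∈ X satisfying a_δᵀx ≤ λ b_δᵀx for all δ ∈ ω), its lexicographic minimum is attained, and its optimal solution Opt(ω) = (λ*, x*) is unique: λ* is the smallest λ ≥ 0 for which a feasible x ∈ X exists, and x* is the unique minimizer of c over the (nonempty compact convex) set {x ∈ X : a_δᵀx ≤ λ* b_δᵀx for all δ ∈ ω}. -/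
open scoped RealInnerProductSpace

/-- Well-posedness of the sampled quasi-linear problem `P(ω)`: it is feasible,
its lexicographic minimum is attained, and its optimal solution `(λ*, x*)` is
unique: `λ*` is the smallest `λ ≥ 0` for which a feasible `x ∈ X` exists, and
`x*` is the unique minimizer of `c` over `{x ∈ X : ⟪a δ, x⟫ ≤ λ* ⟪b δ, x⟫ ∀ δ ∈ ω}`. -/
theorem quasi_linear_problem_well_posed {d : ℕ} (hd : 1 ≤ d) {Δ : Type*}
    (X : Set (EuclideanSpace ℝ (Fin d)))
    (hXcompact : IsCompact X) (hXconvex : Convex ℝ X)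
    (hXint : (interior X).Nonempty) (hX0 : (0 : EuclideanSpace ℝ (Fin d)) ∉ X)
    (a b : Δ → EuclideanSpace ℝ (Fin d))
    (hb : ∀ δ : Δ, ∀ x ∈ X, 0 < ⟪b δ, x⟫)
    (c : EuclideanSpace ℝ (Fin d) → ℝ) (m : ℝ) (hm : 0 < m)
    (hc : StrongConvexOn Set.univ m c)
    (ω : Finset Δ) :
    ∃ lamstar : ℝ, ∃ xstar : EuclideanSpace ℝ (Fin d),
      -- `λ*` is the smallest `λ ≥ 0` admitting a feasible point `x ∈ X`
      IsLeast {lam : ℝ | 0 ≤ lam ∧ ∃ x, QLFeasible X a b (ω : Set Δ) lam x} lamstar ∧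
      -- `x*` is feasible for `λ*`
      QLFeasible X a b (ω : Set Δ) lamstar xstar ∧
      -- `x*` minimizes `c` over the feasible set at `λ*`
      (∀ y, QLFeasible X a b (ω : Set Δ) lamstar y → c xstar ≤ c y) ∧
      -- and it is the unique such minimizer
      (∀ y, QLFeasible X a b (ω : Set Δ) lamstar y → c y = c xstar → y = xstar) ∧
      -- so the lexicographic minimum of `P(ω)` is attained at `(λ*, c(x*))`
      IsLeast (QLValues X a b c (ω : Set Δ)) (toLex (lamstar, c xstar)) := by
  classical
  -- a point of X
  obtain ⟨x₀, hx₀i⟩ := hXint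
  have hx₀ : x₀ ∈ X := interior_subset hx₀i
  -- a feasible λ₀
  obtain ⟨M, hM⟩ := (ω.image fun δ => ⟪a δ, x₀⟫ / ⟪b δ, x₀⟫).exists_le
  set lam0 : ℝ := max 0 M with hlam0def
  have hlam0 : (0:ℝ) ≤ lam0 := le_max_left _ _
  have h₀ : QLFeasible X a b (ω : Set Δ) lam0 x₀ := by
    refine ⟨hlam0, hx₀, fun δ hδ => ?_⟩
    have hbpos := hb δ x₀ hx₀
    have h1 : ⟪a δ, x₀⟫ / ⟪b δ, x₀⟫ ≤ lam0 :=
      le_trans (hM _ (Finset.mem_image_of_mem _ hδ)) (le_max_right _ _)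
    have h2 := mul_le_mul_of_nonneg_right h1 hbpos.le
    rwa [div_mul_cancel₀ _ hbpos.ne'] at h2
  -- the truncated feasible set in (λ, x)
  set S : Set (ℝ × EuclideanSpace ℝ (Fin d)) :=
    {p | p.1 ∈ Set.Icc 0 lam0 ∧ p.2 ∈ X ∧ ∀ δ ∈ ω, ⟪a δ, p.2⟫ ≤ p.1 * ⟪b δ, p.2⟫} with hSdef
  have hScl : IsClosed S := by
    have : S = {p : ℝ × EuclideanSpace ℝ (Fin d) | p.1 ∈ Set.Icc 0 lam0} ∩ ({p : ℝ × EuclideanSpace ℝ (Fin d) | p.2 ∈ X} ∩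
        ⋂ δ ∈ ω, {p : ℝ × EuclideanSpace ℝ (Fin d) | ⟪a δ, p.2⟫ ≤ p.1 * ⟪b δ, p.2⟫}) := by
      ext p
      simp [hSdef, Set.mem_iInter, and_assoc]
    rw [this]
    refine (isClosed_Icc.preimage continuous_fst).inter
      ((hXcompact.isClosed.preimage continuous_snd).inter (isClosed_biInter fun δ _ => ?_))
    exact isClosed_le (continuous_const.inner continuous_snd)
      (continuous_fst.mul (continuous_const.inner continuous_snd))
  have hScpt : IsCompact S :=
    (isCompact_Icc.prod hXcompact).of_isClosed_subset hScl
      (fun p hp => ⟨hp.1, hp.2.1⟩)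
  have hSne : S.Nonempty := ⟨(lam0, x₀), ⟨⟨hlam0, le_refl _⟩, hx₀, h₀.2.2⟩⟩
  -- λ* is the least element of the projection of S
  obtain ⟨lamstar, hls⟩ := (hScpt.image continuous_fst).exists_isLeast (hSne.image _)
  obtain ⟨p, hpS, hp1⟩ := hls.1
  have hls0 : 0 ≤ lamstar := hp1 ▸ hpS.1.1
  have hlsle : lamstar ≤ lam0 := hp1 ▸ hpS.1.2
  have hpfeas : QLFeasible X a b (ω : Set Δ) lamstar p.2 :=
    ⟨hls0, hpS.2.1, by rw [← hp1]; exact fun δ hδ => hpS.2.2 δ (by exact_mod_cast hδ)⟩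
  -- λ* is least among all feasible λ
  have hLeastΛ : IsLeast {lam : ℝ | 0 ≤ lam ∧ ∃ x, QLFeasible X a b (ω : Set Δ) lam x} lamstar := by
    constructor
    · exact ⟨hls0, p.2, hpfeas⟩
    · rintro lam ⟨hlam0', x, hx0, hxX, hxc⟩
      rcases le_or_gt lam lam0 with h | h
      · exact hls.2 ⟨(lam, x), ⟨⟨hx0, h⟩, hxX, fun δ hδ => hxc δ (by exact_mod_cast hδ)⟩, rfl⟩
      · exact hlsle.trans h.le
  -- the feasible set at λ*
  set K : Set (EuclideanSpace ℝ (Fin d)) := {x | x ∈ X ∧ ∀ δ ∈ ω, ⟪a δ, x⟫ ≤ lamstar * ⟪b δ, x⟫} with hKdef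
  have hKne : K.Nonempty := ⟨p.2, hpfeas.2.1, fun δ hδ => hpfeas.2.2 δ (by exact_mod_cast hδ)⟩
  have hKcl : IsClosed K := by
    have : K = X ∩ ⋂ δ ∈ ω, {x : EuclideanSpace ℝ (Fin d) | ⟪a δ, x⟫ ≤ lamstar * ⟪b δ, x⟫} := by
      ext x; simp [hKdef, Set.mem_iInter]
    rw [this]
    exact hXcompact.isClosed.inter (isClosed_biInter fun δ _ => isClosed_le
      (continuous_const.inner continuous_id) (continuous_const.mul
        (continuous_const.inner continuous_id)))
  have hKcpt : IsCompact K := hXcompact.of_isClosed_subset hKcl (fun x hx => hx.1)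
  -- continuity of c
  have hconv : ConvexOn ℝ Set.univ c := hc.convexOn (fun r => by positivity)
  have hcc : Continuous c :=
    continuousOn_univ.mp (hconv.continuousOn isOpen_univ)
  -- minimize c over K
  obtain ⟨xstar, hxsK, hxsmin⟩ := hKcpt.exists_isMinOn hKne hcc.continuousOn
  have hstrict : StrictConvexOn ℝ Set.univ c := hc.strictConvexOn hm
  have hxsfeas : QLFeasible X a b (ω : Set Δ) lamstar xstar :=
    ⟨hls0, hxsK.1, fun δ hδ => hxsK.2 δ (by exact_mod_cast hδ)⟩
  have hfeasK : ∀ y, QLFeasible X a b (ω : Set Δ) lamstar y → y ∈ K := by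
    rintro y ⟨_, hyX, hyc⟩
    exact ⟨hyX, fun δ hδ => hyc δ (by exact_mod_cast hδ)⟩
  have hmin : ∀ y, QLFeasible X a b (ω : Set Δ) lamstar y → c xstar ≤ c y :=
    fun y hy => hxsmin (hfeasK y hy)
  refine ⟨lamstar, xstar, hLeastΛ, hxsfeas, hmin, ?_, ?_⟩
  · -- uniqueness
    intro y hy hcy
    have hymin : IsMinOn c K y := by
      intro z hz
      calc c y = c xstar := hcy
        _ ≤ c z := hxsmin hz
    have hyK := hfeasK y hy
    -- strict convexity on univ; restrict to K? use eq_of_isMinOn on K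
    have hKconv : Convex ℝ K := by
      intro u hu v hv s t hs ht hst
      constructor
      · exact hXconvex hu.1 hv.1 hs ht hst
      · intro δ hδ
        have h1 := hu.2 δ hδ
        have h2 := hv.2 δ hδ
        have e1 : ⟪a δ, s • u + t • v⟫ = s * ⟪a δ, u⟫ + t * ⟪a δ, v⟫ := by
          rw [inner_add_right, real_inner_smul_right, real_inner_smul_right]
        have e2 : ⟪b δ, s • u + t • v⟫ = s * ⟪b δ, u⟫ + t * ⟪b δ, v⟫ := by
          rw [inner_add_right, real_inner_smul_right, real_inner_smul_right]
        rw [e1, e2]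
        nlinarith
    have hstrictK : StrictConvexOn ℝ K c :=
      hstrict.subset (Set.subset_univ K) hKconv
    exact hstrictK.eq_of_isMinOn hymin hxsmin hyK hxsK
  · -- lex least of QLValues
    constructor
    · exact ⟨lamstar, xstar, hxsfeas, rfl⟩
    · rintro q ⟨lam, x, hfx, rfl⟩
      rw [Prod.Lex.le_iff]
      have hlam : lamstar ≤ lam := hLeastΛ.2 ⟨hfx.1, x, hfx⟩
      rcases eq_or_lt_of_le hlam with h | h
      · exact Or.inr ⟨h, hmin x (h ▸ hfx)⟩
      · exact Or.inl h
end

section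
/- Let ζ ∈ ℕ_* and let μ be a Borel probability measure on [0,1] such that ∫_{[0,1]} (1−v)^{N−ζ} dμ(v) = 1/C(N,ζ) for every integer N ≥ ζ, where C(N,ζ) = N!/(ζ!(N−ζ)!). Then μ is the unique measure with cumulative distribution function F(v) = v^ζ on [0,1]; that is, μ([0,v]) = v^ζ for all v ∈ [0,1] (equivalently, μ has density ζ v^{ζ−1} with respect to Lebesgue measure on [0,1]). -/
open MeasureTheory Set Polynomial
open scoped Nat ENNReal

/-! Since `((ζ + k).choose ζ)⁻¹ = ζ ∫₀¹ x^(ζ-1) (1-x)^k dx` (Beta integral), `μ` restricted to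
`[0, 1]` has the same moments against every `(1 - x)^k`, hence against every polynomial, as the
measure with density `ζ x^(ζ-1)`. By Weierstrass approximation, two finite measures on `[a, b]`
integrating all polynomials alike integrate all continuous functions alike, so they coincide, and
the distribution function `v^ζ` is read off the density. -/

theorem integral_pow_mul_one_sub_pow (m k : ℕ) :
    ∫ x in (0 : ℝ)..1, x ^ m * (1 - x) ^ k = (m ! * k ! : ℝ) / (m + k + 1)! := by
  have hβ := Complex.betaIntegral_eq_Gamma_mul_div (m + 1) (k + 1)
    (by norm_num; positivity) (by norm_num; positivity)
  rw [show (m + 1 : ℂ) + (k + 1) = (m + k + 1 : ℕ) + 1 by push_cast; ring,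
    Complex.Gamma_nat_eq_factorial, Complex.Gamma_nat_eq_factorial,
    Complex.Gamma_nat_eq_factorial, Complex.betaIntegral] at hβ
  simp only [add_sub_cancel_right, Complex.cpow_natCast] at hβ
  apply Complex.ofReal_injective
  rw [← intervalIntegral.integral_ofReal]
  push_cast
  exact hβ

theorem dist_setIntegral_le_of_forall_dist_le {α E : Type*} [MeasurableSpace α]
    [NormedAddCommGroup E] [NormedSpace ℝ E] {μ : Measure α} {s : Set α} {f g : α → E} {C : ℝ}
    (hs : μ s < ∞) (hf : IntegrableOn f s μ) (hg : IntegrableOn g s μ)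
    (h : ∀ x ∈ s, dist (f x) (g x) ≤ C) :
    dist (∫ x in s, f x ∂μ) (∫ x in s, g x ∂μ) ≤ C * μ.real s := by
  rw [dist_eq_norm, ← integral_sub hf hg]
  exact norm_setIntegral_le_of_norm_le_const hs fun x hx => dist_eq_norm (f x) (g x) ▸ h x hx

theorem setIntegral_eval_eq_of_forall_setIntegral_sub_pow_eq {μ ν : Measure ℝ} {K : Set ℝ}
    {c : ℝ} (hK : IsCompact K) (hμ : μ K ≠ ∞) (hν : ν K ≠ ∞)
    (h : ∀ k : ℕ, ∫ x in K, (c - x) ^ k ∂μ = ∫ x in K, (c - x) ^ k ∂ν) (p : ℝ[X]) :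
    ∫ x in K, p.eval x ∂μ = ∫ x in K, p.eval x ∂ν := by
  set q := p.comp (C c - X)
  have hq (x : ℝ) : p.eval x = ∑ i ∈ Finset.range (q.natDegree + 1), q.coeff i * (c - x) ^ i := by
    rw [← eval_eq_sum_range, eval_comp]
    simp
  have hintegrable (ρ : Measure ℝ) (hρ : ρ K ≠ ∞) (i : ℕ) :
      IntegrableOn (fun x => q.coeff i * (c - x) ^ i) K ρ :=
    (by fun_prop : Continuous fun x : ℝ => q.coeff i * (c - x) ^ i).continuousOn
      |>.integrableOn_of_subset_isCompact hK hK.measurableSet subset_rfl hρ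
  simp only [hq]
  rw [integral_finsetSum _ fun i _ => hintegrable μ hμ i,
    integral_finsetSum _ fun i _ => hintegrable ν hν i]
  simp only [integral_const_mul, h]

theorem restrict_Icc_eq_of_forall_setIntegral_eval_eq {μ ν : Measure ℝ} {a b : ℝ}
    (hμ : μ (Icc a b) ≠ ∞) (hν : ν (Icc a b) ≠ ∞)
    (h : ∀ p : ℝ[X], ∫ x in Icc a b, p.eval x ∂μ = ∫ x in Icc a b, p.eval x ∂ν) :
    μ.restrict (Icc a b) = ν.restrict (Icc a b) := by
  have : IsFiniteMeasure (μ.restrict (Icc a b)) := isFiniteMeasure_restrict.2 hμ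
  have : IsFiniteMeasure (ν.restrict (Icc a b)) := isFiniteMeasure_restrict.2 hν
  refine ext_of_forall_integral_eq_of_IsFiniteMeasure fun f => eq_of_forall_dist_le fun ε hε => ?_
  set M := μ.real (Icc a b) + ν.real (Icc a b)
  obtain ⟨p, hp⟩ := exists_polynomial_near_of_continuousOn a b f f.continuous.continuousOn
    (ε / (M + 1)) (by positivity)
  have approx (ρ : Measure ℝ) (hρ : ρ (Icc a b) ≠ ∞) :
      dist (∫ x in Icc a b, f x ∂ρ) (∫ x in Icc a b, p.eval x ∂ρ)
        ≤ ε / (M + 1) * ρ.real (Icc a b) := by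
    refine dist_setIntegral_le_of_forall_dist_le hρ.lt_top ?_ ?_ fun x hx => ?_
    · exact f.continuous.continuousOn.integrableOn_of_subset_isCompact isCompact_Icc
        measurableSet_Icc subset_rfl hρ
    · exact p.continuous.continuousOn.integrableOn_of_subset_isCompact isCompact_Icc
        measurableSet_Icc subset_rfl hρ
    · rw [dist_comm, Real.dist_eq]
      exact (hp x hx).le
  calc dist (∫ x in Icc a b, f x ∂μ) (∫ x in Icc a b, f x ∂ν)
      ≤ dist (∫ x in Icc a b, f x ∂μ) (∫ x in Icc a b, p.eval x ∂μ)
        + dist (∫ x in Icc a b, f x ∂ν) (∫ x in Icc a b, p.eval x ∂ν) := by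
        rw [h p]; exact dist_triangle_right _ _ _
    _ ≤ ε / (M + 1) * M := by rw [mul_add]; exact add_le_add (approx μ hμ) (approx ν hν)
    _ ≤ ε := by
        rw [div_mul_eq_mul_div, div_le_iff₀ (by positivity)]
        gcongr
        linarith

/-- Restricted to `[0, 1]`, this is the Beta(ζ, 1) distribution. -/
noncomputable def powDensityMeasure (ζ : ℕ) : Measure ℝ :=
  volume.withDensity fun x => ENNReal.ofReal (ζ * x ^ (ζ - 1))

theorem powDensityMeasure_Icc {ζ : ℕ} (hζ : 0 < ζ) {v : ℝ} (hv : 0 ≤ v) :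
    powDensityMeasure ζ (Icc 0 v) = ENNReal.ofReal (v ^ ζ) := by
  obtain ⟨m, rfl⟩ : ∃ m, ζ = m + 1 := ⟨ζ - 1, by omega⟩
  rw [powDensityMeasure, withDensity_apply _ measurableSet_Icc,
    ← ofReal_integral_eq_lintegral_ofReal (by fun_prop : Continuous _).integrableOn_Icc
      (ae_restrict_of_forall_mem measurableSet_Icc fun x hx => by have := hx.1; positivity),
    integral_Icc_eq_integral_Ioc, ← intervalIntegral.integral_of_le hv,
    intervalIntegral.integral_const_mul, integral_pow, Nat.add_sub_cancel,
    zero_pow m.succ_ne_zero, sub_zero, Nat.cast_succ, mul_div_cancel₀ _ (by positivity)]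

theorem setIntegral_one_sub_pow_powDensityMeasure {ζ : ℕ} (hζ : 0 < ζ) (k : ℕ) :
    ∫ x in Icc 0 1, (1 - x) ^ k ∂powDensityMeasure ζ = 1 / ((ζ + k).choose ζ : ℝ) := by
  obtain ⟨m, rfl⟩ : ∃ m, ζ = m + 1 := ⟨ζ - 1, by omega⟩
  rw [powDensityMeasure, setIntegral_withDensity_eq_setIntegral_toReal_smul (by fun_prop)
    (ae_of_all _ fun _ => ENNReal.ofReal_lt_top) _ measurableSet_Icc, Nat.add_sub_cancel]
  have hdensity : ∀ x ∈ Icc (0 : ℝ) 1,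
      (ENNReal.ofReal ((m + 1 : ℕ) * x ^ m)).toReal • (1 - x) ^ k
        = (m + 1 : ℕ) * (x ^ m * (1 - x) ^ k) := fun x hx => by
    rw [ENNReal.toReal_ofReal (by have := hx.1; positivity), smul_eq_mul, mul_assoc]
  rw [setIntegral_congr_fun measurableSet_Icc hdensity, integral_const_mul,
    integral_Icc_eq_integral_Ioc, ← intervalIntegral.integral_of_le zero_le_one,
    integral_pow_mul_one_sub_pow]
  have hchoose := Nat.choose_mul_factorial_mul_factorial (Nat.le_add_right (m + 1) k)
  rw [Nat.add_sub_cancel_left, Nat.factorial_succ] at hchoose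
  rw [show m + k + 1 = m + 1 + k by omega, ← hchoose]
  push_cast
  field_simp

theorem hausdorff_moment_problem_beta_general (ζ : ℕ) (hζ : 0 < ζ)
    (μ : Measure ℝ) [IsProbabilityMeasure μ]
    (hmom : ∀ N : ℕ, ζ ≤ N →
      ∫ v in Set.Icc (0 : ℝ) 1, (1 - v) ^ (N - ζ) ∂μ = 1 / (N.choose ζ : ℝ)) :
    ∀ v ∈ Set.Icc (0 : ℝ) 1, μ (Set.Icc 0 v) = ENNReal.ofReal (v ^ ζ) := by
  have hfin : powDensityMeasure ζ (Icc 0 1) ≠ ∞ := by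
    rw [powDensityMeasure_Icc hζ zero_le_one]
    exact ENNReal.ofReal_ne_top
  have hmoments (k : ℕ) :
      ∫ x in Icc 0 1, (1 - x) ^ k ∂μ = ∫ x in Icc 0 1, (1 - x) ^ k ∂powDensityMeasure ζ := by
    rw [setIntegral_one_sub_pow_powDensityMeasure hζ, ← hmom (ζ + k) (Nat.le_add_right ζ k),
      Nat.add_sub_cancel_left]
  have hrestrict := restrict_Icc_eq_of_forall_setIntegral_eval_eq (measure_ne_top μ _) hfin
    (setIntegral_eval_eq_of_forall_setIntegral_sub_pow_eq isCompact_Icc (measure_ne_top μ _) hfin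
      hmoments)
  rintro v ⟨hv0, hv1⟩
  have hsub : Icc 0 v ⊆ Icc (0 : ℝ) 1 := Icc_subset_Icc_right hv1
  rw [← Measure.restrict_eq_self μ hsub, hrestrict, Measure.restrict_eq_self _ hsub,
    powDensityMeasure_Icc hζ hv0]

/-- Hausdorff moment problem identity: if a Borel probability measure `μ`
on `[0,1]` satisfies `∫ (1-v)^(N-ζ) dμ(v) = 1 / C(N,ζ)` for every `N ≥ ζ`,
then `μ` is the Beta(ζ,1) distribution, i.e. its CDF is `F(v) = v^ζ`:
`μ([0,v]) = v^ζ` for all `v ∈ [0,1]`. -/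
theorem hausdorff_moment_problem_beta (ζ : ℕ) (hζ : 0 < ζ)
    (μ : Measure ℝ) [IsProbabilityMeasure μ]
    (hsupp : μ (Set.Icc (0 : ℝ) 1) = 1)
    (hmom : ∀ N : ℕ, ζ ≤ N →
      ∫ v in Set.Icc (0 : ℝ) 1, (1 - v) ^ (N - ζ) ∂μ = 1 / (N.choose ζ : ℝ)) :
    ∀ v ∈ Set.Icc (0 : ℝ) 1, μ (Set.Icc 0 v) = ENNReal.ofReal (v ^ ζ) :=
  hausdorff_moment_problem_beta_general ζ hζ μ hmom
end
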